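/- If e ∈ Win_a([p,Q]_a) in the weak spectroscopy energy game G△, then there exists a formula φ ∈ Strat([p,Q]_a, e) with expr(φ) ≤ e. -/

import Mathlib

open Classical

noncomputable section

namespace Spectroscopy

/-! ### Energies and declining energy games -/

/-- Energies: 8-dimensional vectors over `ℕ ∪ {∞}`, ordered componentwise. -/
abbrev Energy : Type := Fin 8 → ℕ∞

/-- The `i`-th unit vector. -/
def unitE (i : Fin 8) : Energy := fun k => if k = i then 1 else 0

/-- The vector with value `v` at position `i` and `0` elsewhere. -/
def onlyAt (i : Fin 8) (v : ℕ∞) : Energy := fun k => if k = i then v else 0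

/-- Components of energy updates: `-1`, `0`, or minimum selection `min_D`.
For the component at position `k`, `minWith D` selects the minimum over the
positions `{k} ∪ D`, so the requirement `k ∈ D` of the paper holds by
construction. -/
inductive UpdComp : Type
  | decr : UpdComp
  | zero : UpdComp
  | minWith (D : Finset (Fin 8)) : UpdComp
deriving DecidableEq

/-- Energy updates. -/
abbrev Update : Type := Fin 8 → UpdComp

/-- Partial application of an update to an energy (`none` when a component
would become negative). -/
def upd (e : Energy) (u : Update) : Option Energy :=
  if ∀ k, u k = UpdComp.decr → e k ≠ 0 then
    some (fun k =>
      match u k with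
      | UpdComp.decr => e k - 1
      | UpdComp.zero => e k
      | UpdComp.minWith D => (insert k D).inf e)
  else none

/-- A declining energy game: positions, a defender predicate (attacker
positions are the non-defender ones), and moves labeled with updates. -/
structure EGame (Pos : Type) where
  defender : Pos → Prop
  move : Pos → Update → Pos → Prop

/-- Attacker winning budgets `Win_a`: at an attacker position some move must
lead to an attacker-won position under the updated energy; at a defender
position every move must (be defined and) lead to an attacker-won position. -/
inductive EGame.Win {Pos : Type} (G : EGame Pos) : Pos → Energy → Prop
  | attack {g : Pos} {u : Update} {g' : Pos} {e e' : Energy} :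
      ¬ G.defender g → G.move g u g' → upd e u = some e' → G.Win g' e' →
      G.Win g e
  | defend {g : Pos} {e : Energy} :
      G.defender g →
      (∀ u g', G.move g u g' → upd e u ≠ none) →
      (∀ u g' e', G.move g u g' → upd e u = some e' → G.Win g' e') →
      G.Win g e

/-! ### Labeled transition systems with silent steps -/

section LTS

variable {Proc Act : Type}

/-- Weak internal steps `↠`: reflexive-transitive closure of `τ`-steps. -/
def Star (Tr : Proc → Act → Proc → Prop) (τ : Act) : Proc → Proc → Prop :=
  Relation.ReflTransGen fun p p' => Tr p τ p'

/-- A process is stable if it has no `τ`-step. -/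
def Stable (Tr : Proc → Act → Proc → Prop) (τ : Act) (p : Proc) : Prop :=
  ∀ p', ¬ Tr p τ p'

/-- Optional step `p →(α) p'`: a real `α`-step, or `α = τ` and `p = p'`. -/
def OptStep (Tr : Proc → Act → Proc → Prop) (τ : Act) (p : Proc) (α : Act) (p' : Proc) : Prop :=
  Tr p α p' ∨ (α = τ ∧ p = p')

/-- Lift of `→a` to sets. -/
def SetStep (Tr : Proc → Act → Proc → Prop) (Q : Set Proc) (a : Act) (Q' : Set Proc) : Prop :=
  Q' = {q' | ∃ q ∈ Q, Tr q a q'}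

/-- Lift of `↠` to sets. -/
def SetStar (Tr : Proc → Act → Proc → Prop) (τ : Act) (Q Q' : Set Proc) : Prop :=
  Q' = {q' | ∃ q ∈ Q, Star Tr τ q q'}

/-- Lift of `→(α)` to sets. -/
def SetOpt (Tr : Proc → Act → Proc → Prop) (τ : Act) (Q : Set Proc) (α : Act)
    (Q' : Set Proc) : Prop :=
  Q' = {q' | ∃ q ∈ Q, OptStep Tr τ q α q'}

end LTS

/-! ### The logic HML_srbb -/

mutual
/-- Formulas `φ` of HML_srbb: `⟨ε⟩χ` or immediate conjunctions `⋀Ψ`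
(conjunctions are indexed by an arbitrary type). `⊤` is the empty conjunction. -/
inductive Formula (Act : Type) (τ : Act) : Type 1
  | delayed : DFormula Act τ → Formula Act τ
  | conj : (I : Type) → (I → Conjunct Act τ) → Formula Act τ

/-- Delayed formulas `χ`: observations `⟨a⟩φ` (with `a ≠ τ`), standard
conjunctions `⋀Ψ`, stable conjunctions `⋀({¬⟨τ⟩⊤} ∪ Ψ)`, and branching
conjunctions `⋀({(α)φ} ∪ Ψ)`. -/
inductive DFormula (Act : Type) (τ : Act) : Type 1
  | obs : (a : Act) → a ≠ τ → Formula Act τ → DFormula Act τ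
  | conj : (I : Type) → (I → Conjunct Act τ) → DFormula Act τ
  | stableConj : (I : Type) → (I → Conjunct Act τ) → DFormula Act τ
  | branchConj : (α : Act) → Formula Act τ → (I : Type) → (I → Conjunct Act τ) → DFormula Act τ

/-- Conjuncts `ψ`: positive `⟨ε⟩χ` or negative `¬⟨ε⟩χ`. -/
inductive Conjunct (Act : Type) (τ : Act) : Type 1
  | pos : DFormula Act τ → Conjunct Act τ
  | neg : DFormula Act τ → Conjunct Act τ
end

section Semantics

variable {Proc Act : Type}

mutual
/-- Semantics `⟦φ⟧`. -/
def Sat (Tr : Proc → Act → Proc → Prop) (τ : Act) (p : Proc) : Formula Act τ → Prop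
  | .delayed χ => ∃ p', Star Tr τ p p' ∧ SatD Tr τ p' χ
  | .conj _ ps => ∀ i, SatC Tr τ p (ps i)

/-- Semantics `⟦χ⟧^ε` of delayed formulas. -/
def SatD (Tr : Proc → Act → Proc → Prop) (τ : Act) (p : Proc) : DFormula Act τ → Prop
  | .obs a _ φ => ∃ p', Tr p a p' ∧ Sat Tr τ p' φ
  | .conj _ ps => ∀ i, SatC Tr τ p (ps i)
  | .stableConj _ ps => Stable Tr τ p ∧ ∀ i, SatC Tr τ p (ps i)
  | .branchConj α φ _ ps =>
      (∃ p', OptStep Tr τ p α p' ∧ Sat Tr τ p' φ) ∧ ∀ i, SatC Tr τ p (ps i)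

/-- Semantics `⟦ψ⟧^∧` of conjuncts. -/
def SatC (Tr : Proc → Act → Proc → Prop) (τ : Act) (p : Proc) : Conjunct Act τ → Prop
  | .pos χ => ∃ p', Star Tr τ p p' ∧ SatD Tr τ p' χ
  | .neg χ => ¬ ∃ p', Star Tr τ p p' ∧ SatD Tr τ p' χ
end

/-- `φ` distinguishes `p` from the set `Q`. -/
def Distinguishes (Tr : Proc → Act → Proc → Prop) (τ : Act) (φ : Formula Act τ)
    (p : Proc) (Q : Set Proc) : Prop :=
  Sat Tr τ p φ ∧ ∀ q ∈ Q, ¬ Sat Tr τ q φ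

/-- The delayed formula `χ` distinguishes `p` from the set `Q` w.r.t. `⟦·⟧^ε`. -/
def DistinguishesD (Tr : Proc → Act → Proc → Prop) (τ : Act) (χ : DFormula Act τ)
    (p : Proc) (Q : Set Proc) : Prop :=
  SatD Tr τ p χ ∧ ∀ q ∈ Q, ¬ SatD Tr τ q χ

/-- The conjunct `ψ` distinguishes `p` from `q` w.r.t. `⟦·⟧^∧`. -/
def DistinguishesC (Tr : Proc → Act → Proc → Prop) (τ : Act) (ψ : Conjunct Act τ)
    (p q : Proc) : Prop :=
  SatC Tr τ p ψ ∧ ¬ SatC Tr τ q ψ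

/-- Stability-respecting branching bisimulations: symmetric relations with the
branching-bisimulation transfer property and the stability-respecting
property. -/
def IsSRBBisim (Tr : Proc → Act → Proc → Prop) (τ : Act) (R : Proc → Proc → Prop) : Prop :=
  Symmetric R ∧
  (∀ p q, R p q → ∀ α p', Tr p α p' →
    (α = τ ∧ R p' q) ∨
      ∃ q' q'', Star Tr τ q q' ∧ Tr q' α q'' ∧ R p q' ∧ R p' q'') ∧
  (∀ p q, R p q → Stable Tr τ p →
    ∃ q', Star Tr τ q q' ∧ Stable Tr τ q' ∧ R p q')

end Semantics

/-! ### Expressiveness prices -/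

section Expr

variable {Act : Type} {τ : Act}

mutual
/-- Expressiveness price `expr` of formulas. -/
def exprF : Formula Act τ → Energy
  | .delayed χ => exprE χ
  | .conj I ps => ⨆ _ : Nonempty I, ((unitE 4 + unitE 2) + ⨆ i, exprC (ps i))

/-- Expressiveness price `expr^ε` of delayed formulas. -/
def exprE : DFormula Act τ → Energy
  | .obs _ _ φ => unitE 0 + exprF φ
  | .conj I ps => ⨆ _ : Nonempty I, (unitE 2 + ⨆ i, exprC (ps i))
  | .stableConj _ ps => unitE 3 + ⨆ i, exprC (ps i)
  | .branchConj _ φ _ ps =>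
      (unitE 1 + unitE 2) +
        (((unitE 0 + exprF φ) ⊔ onlyAt 5 (1 + exprF φ 0)) ⊔ ⨆ i, exprC (ps i))

/-- Expressiveness price `expr^∧` of conjuncts. -/
def exprC : Conjunct Act τ → Energy
  | .pos χ => exprE χ ⊔ onlyAt 5 (exprE χ 0)
  | .neg χ => (unitE 7 + exprE χ) ⊔ onlyAt 6 (exprE χ 0)
end

end Expr

/-! ### The weak spectroscopy energy game -/

/-- Positions of the weak spectroscopy game. -/
inductive GPos (Proc Act : Type) : Type
  | att (p : Proc) (Q : Set Proc)                                 -- `[p,Q]_a`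
  | attD (p : Proc) (Q : Set Proc)                                -- `[p,Q]^ε_a`
  | attC (p q : Proc)                                             -- `[p,q]^∧_a`
  | attB (p : Proc) (Q : Set Proc)                                -- `[p,Q]^η_a`
  | defC (p : Proc) (Q : Set Proc)                                -- `(p,Q)_d`
  | defS (p : Proc) (Q : Set Proc)                                -- `(p,Q)^s_d`
  | defB (p : Proc) (α : Act) (p' : Proc) (Q Qa : Set Proc)       -- `(p,α,p',Q,Qa)^η_d`

/-- The zero update. -/
def zeroU : Update := fun _ => UpdComp.zero

/-- The update `-ê_i`. -/
def decU (i : Fin 8) : Update := fun k => if k = i then UpdComp.decr else UpdComp.zero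

/-- The update `(min_{1,6},0,0,0,0,0,0,0)`. -/
def minU16 : Update := fun k => if k = 0 then UpdComp.minWith {5} else UpdComp.zero

/-- The update `(min_{1,7},0,0,0,0,0,0,-1)`. -/
def minU17dec8 : Update := fun k =>
  if k = 0 then UpdComp.minWith {6} else if k = 7 then UpdComp.decr else UpdComp.zero

/-- The update `(0,-1,-1,0,0,0,0,0)`. -/
def dec23 : Update := fun k => if k = 1 ∨ k = 2 then UpdComp.decr else UpdComp.zero

/-- The update `(min_{1,6},-1,-1,0,0,0,0,0)`. -/
def minU16dec23 : Update := fun k =>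
  if k = 0 then UpdComp.minWith {5}
  else if k = 1 ∨ k = 2 then UpdComp.decr else UpdComp.zero

section Game

variable {Proc Act : Type}

/-- Moves of the weak spectroscopy game. -/
inductive GMove (Tr : Proc → Act → Proc → Prop) (τ : Act) :
    GPos Proc Act → Update → GPos Proc Act → Prop
  | delay {p : Proc} {Q Q' : Set Proc} :
      SetStar Tr τ Q Q' →
      GMove Tr τ (.att p Q) zeroU (.attD p Q')
  | procrastination {p p' : Proc} {Q : Set Proc} :
      Tr p τ p' → p ≠ p' →
      GMove Tr τ (.attD p Q) zeroU (.attD p' Q)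
  | observation {p p' : Proc} {a : Act} {Q Q' : Set Proc} :
      Tr p a p' → a ≠ τ → SetStep Tr Q a Q' →
      GMove Tr τ (.attD p Q) (decU 0) (.att p' Q')
  | finishing {p : Proc} :
      GMove Tr τ (.att p ∅) zeroU (.defC p ∅)
  | immediateConj {p : Proc} {Q : Set Proc} :
      Q ≠ ∅ →
      GMove Tr τ (.att p Q) (decU 4) (.defC p Q)
  | lateConj {p : Proc} {Q : Set Proc} :
      GMove Tr τ (.attD p Q) zeroU (.defC p Q)
  | conjAnswer {p q : Proc} {Q : Set Proc} :
      q ∈ Q →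
      GMove Tr τ (.defC p Q) (decU 2) (.attC p q)
  | posConjunct {p q : Proc} {Q : Set Proc} :
      SetStar Tr τ {q} Q →
      GMove Tr τ (.attC p q) minU16 (.attD p Q)
  | negConjunct {p q : Proc} {Q : Set Proc} :
      SetStar Tr τ {p} Q → p ≠ q →
      GMove Tr τ (.attC p q) minU17dec8 (.attD q Q)
  | stableConj {p : Proc} {Q : Set Proc} :
      Stable Tr τ p →
      GMove Tr τ (.attD p Q) zeroU (.defS p {q ∈ Q | Stable Tr τ q})
  | conjStableAnswer {p q : Proc} {Q : Set Proc} :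
      q ∈ Q →
      GMove Tr τ (.defS p Q) (decU 3) (.attC p q)
  | stableFinishing {p : Proc} :
      GMove Tr τ (.defS p ∅) (decU 3) (.defC p ∅)
  | branchConj {p p' : Proc} {α : Act} {Q Qa : Set Proc} :
      OptStep Tr τ p α p' → Qa ⊆ Q →
      GMove Tr τ (.attD p Q) zeroU (.defB p α p' (Q \ Qa) Qa)
  | branchAnswer {p p' q : Proc} {α : Act} {Q Qa : Set Proc} :
      q ∈ Q →
      GMove Tr τ (.defB p α p' Q Qa) dec23 (.attC p q)
  | branchObservation {p p' : Proc} {α : Act} {Q Qa Q' : Set Proc} :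
      SetOpt Tr τ Qa α Q' →
      GMove Tr τ (.defB p α p' Q Qa) minU16dec23 (.attB p' Q')
  | branchAccounting {p : Proc} {Q : Set Proc} :
      GMove Tr τ (.attB p Q) (decU 0) (.att p Q)

/-- Defender positions of the weak spectroscopy game. -/
def isDefender : GPos Proc Act → Prop
  | .defC _ _ => True
  | .defS _ _ => True
  | .defB _ _ _ _ _ => True
  | _ => False

/-- The weak spectroscopy energy game `G△`. -/
def specGame (Tr : Proc → Act → Proc → Prop) (τ : Act) : EGame (GPos Proc Act) where
  defender := isDefender
  move := GMove Tr τ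

end Game

/-! ### Strategy formulas -/

section Strat

variable {Proc Act : Type}

mutual
/-- Attacker strategy formulas (formula sort). -/
inductive StratF (Tr : Proc → Act → Proc → Prop) (τ : Act) :
    GPos Proc Act → Energy → Formula Act τ → Prop
  | delay {p : Proc} {Q Q' : Set Proc} {u : Update} {e e' : Energy} {χ : DFormula Act τ} :
      GMove Tr τ (.att p Q) u (.attD p Q') →
      upd e u = some e' →
      (specGame Tr τ).Win (.attD p Q') e' →
      StratD Tr τ (.attD p Q') e' χ →
      StratF Tr τ (.att p Q) e (.delayed χ)
  | immediateConj {p : Proc} {Q : Set Proc} {u : Update} {e e' : Energy}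
      {I : Type} {ps : I → Conjunct Act τ} :
      GMove Tr τ (.att p Q) u (.defC p Q) →
      upd e u = some e' →
      (specGame Tr τ).Win (.defC p Q) e' →
      StratD Tr τ (.defC p Q) e' (.conj I ps) →
      StratF Tr τ (.att p Q) e (.conj I ps)

/-- Attacker strategy formulas (delayed-formula sort). -/
inductive StratD (Tr : Proc → Act → Proc → Prop) (τ : Act) :
    GPos Proc Act → Energy → DFormula Act τ → Prop
  | procrastination {p p' : Proc} {Q : Set Proc} {u : Update} {e e' : Energy}
      {χ : DFormula Act τ} :
      GMove Tr τ (.attD p Q) u (.attD p' Q) →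
      upd e u = some e' →
      (specGame Tr τ).Win (.attD p' Q) e' →
      StratD Tr τ (.attD p' Q) e' χ →
      StratD Tr τ (.attD p Q) e χ
  | observation {p p' : Proc} {a : Act} {Q Q' : Set Proc} {u : Update} {e e' : Energy}
      {φ : Formula Act τ} (ha : a ≠ τ) :
      GMove Tr τ (.attD p Q) u (.att p' Q') →
      Tr p a p' → SetStep Tr Q a Q' →
      upd e u = some e' →
      (specGame Tr τ).Win (.att p' Q') e' →
      StratF Tr τ (.att p' Q') e' φ →
      StratD Tr τ (.attD p Q) e (.obs a ha φ)
  | lateConj {p : Proc} {Q : Set Proc} {u : Update} {e e' : Energy} {χ : DFormula Act τ} :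
      GMove Tr τ (.attD p Q) u (.defC p Q) →
      upd e u = some e' →
      (specGame Tr τ).Win (.defC p Q) e' →
      StratD Tr τ (.defC p Q) e' χ →
      StratD Tr τ (.attD p Q) e χ
  | stable {p : Proc} {Q Q' : Set Proc} {u : Update} {e e' : Energy} {χ : DFormula Act τ} :
      GMove Tr τ (.attD p Q) u (.defS p Q') →
      upd e u = some e' →
      (specGame Tr τ).Win (.defS p Q') e' →
      StratD Tr τ (.defS p Q') e' χ →
      StratD Tr τ (.attD p Q) e χ
  | branch {p p' : Proc} {α : Act} {Q Q' Qa : Set Proc} {u : Update} {e e' : Energy}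
      {χ : DFormula Act τ} :
      GMove Tr τ (.attD p Q) u (.defB p α p' Q' Qa) →
      upd e u = some e' →
      (specGame Tr τ).Win (.defB p α p' Q' Qa) e' →
      StratD Tr τ (.defB p α p' Q' Qa) e' χ →
      StratD Tr τ (.attD p Q) e χ
  | conj {p : Proc} {Q : Set Proc} {e : Energy}
      (us : {q // q ∈ Q} → Update) (es : {q // q ∈ Q} → Energy)
      (ψs : {q // q ∈ Q} → Conjunct Act τ) :
      (∀ qq : {q // q ∈ Q}, GMove Tr τ (.defC p Q) (us qq) (.attC p qq.1)) →
      (∀ qq : {q // q ∈ Q}, upd e (us qq) = some (es qq)) →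
      (∀ qq : {q // q ∈ Q}, (specGame Tr τ).Win (.attC p qq.1) (es qq)) →
      (∀ qq : {q // q ∈ Q}, StratC Tr τ (.attC p qq.1) (es qq) (ψs qq)) →
      StratD Tr τ (.defC p Q) e (.conj {q // q ∈ Q} ψs)
  | stableConj {p : Proc} {Q : Set Proc} {e : Energy}
      (hne : Q.Nonempty)
      (us : {q // q ∈ Q} → Update) (es : {q // q ∈ Q} → Energy)
      (ψs : {q // q ∈ Q} → Conjunct Act τ) :
      (∀ qq : {q // q ∈ Q}, GMove Tr τ (.defS p Q) (us qq) (.attC p qq.1)) →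
      (∀ qq : {q // q ∈ Q}, upd e (us qq) = some (es qq)) →
      (∀ qq : {q // q ∈ Q}, (specGame Tr τ).Win (.attC p qq.1) (es qq)) →
      (∀ qq : {q // q ∈ Q}, StratC Tr τ (.attC p qq.1) (es qq) (ψs qq)) →
      StratD Tr τ (.defS p Q) e (.stableConj {q // q ∈ Q} ψs)
  | stableFinish {p : Proc} {u : Update} {e e' : Energy} :
      GMove Tr τ (.defS p ∅) u (.defC p ∅) →
      upd e u = some e' →
      (specGame Tr τ).Win (.defC p (∅ : Set Proc)) e' →
      StratD Tr τ (.defS p ∅) e (.stableConj Empty fun x => x.elim)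
  | branchConj {p p' : Proc} {α : Act} {Q Qa Q' : Set Proc} {ua ua' : Update}
      {e e1 ea : Energy} {φa : Formula Act τ}
      (us : {q // q ∈ Q} → Update) (es : {q // q ∈ Q} → Energy)
      (ψs : {q // q ∈ Q} → Conjunct Act τ) :
      GMove Tr τ (.defB p α p' Q Qa) ua (.attB p' Q') →
      GMove Tr τ (.attB p' Q') ua' (.att p' Q') →
      upd e ua = some e1 →
      upd e1 ua' = some ea →
      (specGame Tr τ).Win (.att p' Q') ea →
      StratF Tr τ (.att p' Q') ea φa →
      (∀ qq : {q // q ∈ Q}, GMove Tr τ (.defB p α p' Q Qa) (us qq) (.attC p qq.1)) →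
      (∀ qq : {q // q ∈ Q}, upd e (us qq) = some (es qq)) →
      (∀ qq : {q // q ∈ Q}, (specGame Tr τ).Win (.attC p qq.1) (es qq)) →
      (∀ qq : {q // q ∈ Q}, StratC Tr τ (.attC p qq.1) (es qq) (ψs qq)) →
      StratD Tr τ (.defB p α p' Q Qa) e (.branchConj α φa {q // q ∈ Q} ψs)

/-- Attacker strategy formulas (conjunct sort). -/
inductive StratC (Tr : Proc → Act → Proc → Prop) (τ : Act) :
    GPos Proc Act → Energy → Conjunct Act τ → Prop
  | pos {p q : Proc} {Q' : Set Proc} {u : Update} {e e' : Energy} {χ : DFormula Act τ} :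
      GMove Tr τ (.attC p q) u (.attD p Q') →
      upd e u = some e' →
      (specGame Tr τ).Win (.attD p Q') e' →
      StratD Tr τ (.attD p Q') e' χ →
      StratC Tr τ (.attC p q) e (.pos χ)
  | neg {p q : Proc} {P' : Set Proc} {u : Update} {e e' : Energy} {χ : DFormula Act τ} :
      GMove Tr τ (.attC p q) u (.attD q P') →
      upd e u = some e' →
      (specGame Tr τ).Win (.attD q P') e' →
      StratD Tr τ (.attD q P') e' χ →
      StratC Tr τ (.attC p q) e (.neg χ)
end

end Strat


/-! ### Auxiliary lemmas -/

section Aux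

lemma upd_some {e : Energy} {u : Update} {e' : Energy} (h : upd e u = some e') :
    (∀ k, u k = UpdComp.decr → e k ≠ 0) ∧
    ∀ k, e' k = match u k with
      | UpdComp.decr => e k - 1
      | UpdComp.zero => e k
      | UpdComp.minWith D => (insert k D).inf e := by
  unfold upd at h
  split at h
  · refine ⟨‹_›, fun k => ?_⟩
    have := (Option.some.injEq _ _).mp h
    rw [← this]
  · exact absurd h (by simp)

lemma one_add_le {a b : ℕ∞} (ha : a ≠ 0) (h : b ≤ a - 1) : 1 + b ≤ a := by
  calc 1 + b ≤ 1 + (a - 1) := add_le_add_right h 1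
    _ = (a - 1) + 1 := add_comm _ _
    _ = a := tsub_add_cancel_of_le (ENat.one_le_iff_ne_zero.mpr ha)

lemma upd_zeroU (e : Energy) : upd e zeroU = some e := by
  simp [upd, zeroU]

lemma upd_zeroU_eq {e e' : Energy} (h : upd e zeroU = some e') : e' = e := by
  rw [upd_zeroU] at h
  exact (Option.some.inj h).symm

lemma decU_fact {e e' : Energy} {i : Fin 8} (h : upd e (decU i) = some e') :
    e i ≠ 0 ∧ e' i = e i - 1 ∧ ∀ k, k ≠ i → e' k = e k := by
  obtain ⟨h1, h2⟩ := upd_some h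
  refine ⟨h1 i (by simp [decU]), ?_, fun k hk => ?_⟩
  · rw [h2 i]; simp [decU]
  · rw [h2 k]; simp [decU, hk]

lemma unit_add_le {e e' : Energy} {i : Fin 8} (h : upd e (decU i) = some e') :
    unitE i + e' ≤ e := by
  obtain ⟨h0, hi, hk⟩ := decU_fact h
  intro k
  by_cases hki : k = i
  · subst hki
    simp only [Pi.add_apply, unitE, if_pos rfl, hi]
    exact one_add_le h0 le_rfl
  · simp [Pi.add_apply, unitE, hki, hk k hki]

lemma minU16_fact {e e' : Energy} (h : upd e minU16 = some e') :
    e' 0 = e 0 ⊓ e 5 ∧ ∀ k, k ≠ 0 → e' k = e k := by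
  obtain ⟨_, h2⟩ := upd_some h
  refine ⟨?_, fun k hk => ?_⟩
  · rw [h2 0]; simp [minU16]
  · rw [h2 k]; simp [minU16, hk]

lemma minU17dec8_fact {e e' : Energy} (h : upd e minU17dec8 = some e') :
    e 7 ≠ 0 ∧ e' 0 = e 0 ⊓ e 6 ∧ e' 7 = e 7 - 1 ∧
      ∀ k, k ≠ 0 → k ≠ 7 → e' k = e k := by
  obtain ⟨h1, h2⟩ := upd_some h
  refine ⟨h1 7 (by simp [minU17dec8]), ?_, ?_, fun k hk0 hk7 => ?_⟩
  · rw [h2 0]; simp [minU17dec8]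
  · rw [h2 7]; simp [minU17dec8]
  · rw [h2 k]; simp [minU17dec8, hk0, hk7]

lemma dec23_fact {e e' : Energy} (h : upd e dec23 = some e') :
    e 1 ≠ 0 ∧ e 2 ≠ 0 ∧ e' 1 = e 1 - 1 ∧ e' 2 = e 2 - 1 ∧
      ∀ k, k ≠ 1 → k ≠ 2 → e' k = e k := by
  obtain ⟨h1, h2⟩ := upd_some h
  refine ⟨h1 1 (by simp [dec23]), h1 2 (by simp [dec23]), ?_, ?_, fun k hk1 hk2 => ?_⟩
  · rw [h2 1]; simp [dec23]
  · rw [h2 2]; simp [dec23]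
  · rw [h2 k]; simp [dec23, hk1, hk2]

lemma minU16dec23_fact {e e' : Energy} (h : upd e minU16dec23 = some e') :
    e 1 ≠ 0 ∧ e 2 ≠ 0 ∧ e' 0 = e 0 ⊓ e 5 ∧ e' 1 = e 1 - 1 ∧ e' 2 = e 2 - 1 ∧
      ∀ k, k ≠ 0 → k ≠ 1 → k ≠ 2 → e' k = e k := by
  obtain ⟨h1, h2⟩ := upd_some h
  refine ⟨h1 1 (by simp [minU16dec23]), h1 2 (by simp [minU16dec23]), ?_, ?_, ?_,
    fun k hk0 hk1 hk2 => ?_⟩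
  · rw [h2 0]; simp [minU16dec23]
  · rw [h2 1]; simp [minU16dec23]
  · rw [h2 2]; simp [minU16dec23]
  · rw [h2 k]; simp [minU16dec23, hk0, hk1, hk2]

lemma pos_price {e e' x : Energy} (h : upd e minU16 = some e') (hx : x ≤ e') :
    x ⊔ onlyAt 5 (x 0) ≤ e := by
  obtain ⟨h0, hk⟩ := minU16_fact h
  have hx0 : x 0 ≤ e 0 ⊓ e 5 := (hx 0).trans_eq h0
  intro k
  rw [Pi.sup_apply]
  refine sup_le ?_ ?_
  · by_cases hk0 : k = 0
    · subst hk0; exact hx0.trans inf_le_left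
    · exact (hx k).trans_eq (hk k hk0)
  · by_cases hk5 : k = 5
    · subst hk5
      simpa [onlyAt] using hx0.trans inf_le_right
    · simp [onlyAt, hk5]

lemma neg_price {e e' x : Energy} (h : upd e minU17dec8 = some e') (hx : x ≤ e') :
    (unitE 7 + x) ⊔ onlyAt 6 (x 0) ≤ e := by
  obtain ⟨h7, h0, h7', hk⟩ := minU17dec8_fact h
  have hx0 : x 0 ≤ e 0 ⊓ e 6 := (hx 0).trans_eq h0
  intro k
  rw [Pi.sup_apply]
  refine sup_le ?_ ?_
  · by_cases hk7 : k = 7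
    · subst hk7
      simp only [Pi.add_apply, unitE, if_pos rfl]
      exact one_add_le h7 ((hx 7).trans_eq h7')
    · by_cases hk0 : k = 0
      · subst hk0
        simpa [unitE] using hx0.trans inf_le_left
      · simp only [Pi.add_apply, unitE, if_neg hk7, zero_add]
        exact (hx k).trans_eq (hk k hk0 hk7)
  · by_cases hk6 : k = 6
    · subst hk6
      simpa [onlyAt] using hx0.trans inf_le_right
    · simp [onlyAt, hk6]

lemma branch_price {e e1 ea f S : Energy}
    (h1 : upd e minU16dec23 = some e1) (h0 : upd e1 (decU 0) = some ea)
    (hf : f ≤ ea)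
    (hS1 : S 1 ≤ e 1 - 1) (hS2 : S 2 ≤ e 2 - 1)
    (hSk : ∀ k, k ≠ 1 → k ≠ 2 → S k ≤ e k) :
    (unitE 1 + unitE 2) + (((unitE 0 + f) ⊔ onlyAt 5 (1 + f 0)) ⊔ S) ≤ e := by
  obtain ⟨he1, he2, hm0, hm1, hm2, hmk⟩ := minU16dec23_fact h1
  obtain ⟨hea0, hea0', heak⟩ := decU_fact h0
  -- bound on `1 + f 0`
  have hf0 : 1 + f 0 ≤ e 0 ⊓ e 5 := by
    rw [← hm0]
    exact one_add_le (hm0 ▸ hea0) ((hf 0).trans_eq (hm0 ▸ hea0' : ea 0 = e1 0 - 1))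
  have hfk : ∀ k, k ≠ 0 → f k ≤ e1 k := fun k hk => (hf k).trans_eq (heak k hk)
  intro k
  simp only [Pi.add_apply, Pi.sup_apply]
  by_cases hk0 : k = 0
  · subst hk0
    rw [show unitE 1 0 = 0 from by simp [unitE], show unitE 2 0 = 0 from by simp [unitE],
      show unitE 0 0 = 1 from by simp [unitE],
      show onlyAt 5 (1 + f 0) 0 = 0 from by simp [onlyAt]]
    simp only [zero_add, add_zero, sup_le_iff]
    exact ⟨⟨hf0.trans inf_le_left, zero_le⟩, hSk 0 (by decide) (by decide)⟩
  · by_cases hk1 : k = 1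
    · subst hk1
      rw [show unitE 1 1 = 1 from by simp [unitE], show unitE 2 1 = 0 from by simp [unitE],
        show unitE 0 1 = 0 from by simp [unitE],
        show onlyAt 5 (1 + f 0) 1 = 0 from by simp [onlyAt]]
      simp only [zero_add, add_zero, sup_le_iff]
      refine one_add_le he1 ?_
      simp only [sup_le_iff]
      exact ⟨⟨(hfk 1 (by decide)).trans_eq hm1, by simp⟩, hS1⟩
    · by_cases hk2 : k = 2
      · subst hk2
        rw [show unitE 1 2 = 0 from by simp [unitE], show unitE 2 2 = 1 from by simp [unitE],
          show unitE 0 2 = 0 from by simp [unitE],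
          show onlyAt 5 (1 + f 0) 2 = 0 from by simp [onlyAt]]
        simp only [zero_add, add_zero, sup_le_iff]
        refine one_add_le he2 ?_
        simp only [sup_le_iff]
        exact ⟨⟨(hfk 2 (by decide)).trans_eq hm2, by simp⟩, hS2⟩
      · by_cases hk5 : k = 5
        · subst hk5
          rw [show unitE 1 5 = 0 from by simp [unitE], show unitE 2 5 = 0 from by simp [unitE],
            show unitE 0 5 = 0 from by simp [unitE],
            show onlyAt 5 (1 + f 0) 5 = 1 + f 0 from by simp [onlyAt]]
          simp only [zero_add, add_zero, sup_le_iff]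
          exact ⟨⟨(hfk 5 (by decide)).trans_eq (hmk 5 (by decide) (by decide) (by decide)),
            hf0.trans inf_le_right⟩, hSk 5 (by decide) (by decide)⟩
        · rw [show unitE 1 k = 0 from by simp [unitE, hk1],
            show unitE 2 k = 0 from by simp [unitE, hk2],
            show unitE 0 k = 0 from by simp [unitE, hk0],
            show onlyAt 5 (1 + f 0) k = 0 from by simp [onlyAt, hk5]]
          simp only [zero_add, add_zero, sup_le_iff]
          exact ⟨⟨(hfk k hk0).trans_eq (hmk k hk0 hk1 hk2), zero_le⟩, hSk k hk1 hk2⟩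

end Aux

section Main

variable {Proc Act : Type} {Tr : Proc → Act → Proc → Prop} {τ : Act}

lemma exprF_conj_le {I : Type} {ps : I → Conjunct Act τ} :
    exprF (Formula.conj I ps) ≤ unitE 4 + exprE (DFormula.conj I ps) := by
  rw [exprF, exprE]
  refine iSup_le fun h => ?_
  calc (unitE 4 + unitE 2) + ⨆ i, exprC (ps i)
      = unitE 4 + (unitE 2 + ⨆ i, exprC (ps i)) := add_assoc _ _ _
    _ ≤ unitE 4 + ⨆ _ : Nonempty I, (unitE 2 + ⨆ i, exprC (ps i)) :=
        add_le_add_right (le_iSup (fun _ : Nonempty I => unitE 2 + ⨆ i, exprC (ps i)) h) _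

/-- The statement to prove by induction on winning budgets, per position type. -/
def Motive (Tr : Proc → Act → Proc → Prop) (τ : Act) : GPos Proc Act → Energy → Prop :=
  fun g e =>
  match g with
  | .att p Q => ∃ φ : Formula Act τ, StratF Tr τ (.att p Q) e φ ∧ exprF φ ≤ e
  | .attD p Q => ∃ χ : DFormula Act τ, StratD Tr τ (.attD p Q) e χ ∧ exprE χ ≤ e
  | .attC p q => ∃ ψ : Conjunct Act τ, StratC Tr τ (.attC p q) e ψ ∧ exprC ψ ≤ e
  | .attB p Q => ∃ (e' : Energy) (φ : Formula Act τ), upd e (decU 0) = some e' ∧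
      (specGame Tr τ).Win (.att p Q) e' ∧ StratF Tr τ (.att p Q) e' φ ∧ exprF φ ≤ e'
  | .defC p Q => ∃ ψs : {q // q ∈ Q} → Conjunct Act τ,
      StratD Tr τ (.defC p Q) e (.conj _ ψs) ∧ exprE (DFormula.conj {q // q ∈ Q} ψs) ≤ e
  | .defS p Q => ∃ χ : DFormula Act τ, StratD Tr τ (.defS p Q) e χ ∧ exprE χ ≤ e
  | .defB p α p' Q Qa => ∃ χ : DFormula Act τ,
      StratD Tr τ (.defB p α p' Q Qa) e χ ∧ exprE χ ≤ e

lemma win_motive {g : GPos Proc Act} {e : Energy}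
    (h : (specGame Tr τ).Win g e) : Motive Tr τ g e := by
  induction h with
  | @attack g u g' e e' hnd hm hupd hw ih =>
    cases hm with
    | delay hset =>
      have he := upd_zeroU_eq hupd; subst he
      obtain ⟨χ, hs, hb⟩ := ih
      exact ⟨.delayed χ, .delay (.delay hset) hupd hw hs, by rw [exprF]; exact hb⟩
    | procrastination htr hne =>
      have he := upd_zeroU_eq hupd; subst he
      obtain ⟨χ, hs, hb⟩ := ih
      exact ⟨χ, .procrastination (.procrastination htr hne) hupd hw hs, hb⟩
    | @observation p p' a Q Q' htr hne hset =>
      obtain ⟨φ, hs, hb⟩ := ih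
      refine ⟨.obs a hne φ, .observation hne (.observation htr hne hset) htr hset hupd hw hs, ?_⟩
      rw [exprE]
      exact le_trans (add_le_add_right hb _) (unit_add_le hupd)
    | finishing =>
      have he := upd_zeroU_eq hupd; subst he
      obtain ⟨ψs, hs, hb⟩ := ih
      refine ⟨.conj _ ψs, .immediateConj .finishing hupd hw hs, ?_⟩
      rw [exprF]
      exact iSup_le fun hne => absurd hne.some.2 (Set.notMem_empty _)
    | immediateConj hQ =>
      obtain ⟨ψs, hs, hb⟩ := ih
      refine ⟨.conj _ ψs, .immediateConj (.immediateConj hQ) hupd hw hs, ?_⟩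
      exact le_trans exprF_conj_le (le_trans (add_le_add_right hb _) (unit_add_le hupd))
    | lateConj =>
      have he := upd_zeroU_eq hupd; subst he
      obtain ⟨ψs, hs, hb⟩ := ih
      exact ⟨.conj _ ψs, .lateConj .lateConj hupd hw hs, hb⟩
    | conjAnswer hq => exact absurd trivial hnd
    | posConjunct hset =>
      obtain ⟨χ, hs, hb⟩ := ih
      exact ⟨.pos χ, .pos (.posConjunct hset) hupd hw hs, by rw [exprC]; exact pos_price hupd hb⟩
    | negConjunct hset hne =>
      obtain ⟨χ, hs, hb⟩ := ih
      exact ⟨.neg χ, .neg (.negConjunct hset hne) hupd hw hs,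
        by rw [exprC]; exact neg_price hupd hb⟩
    | stableConj hst =>
      have he := upd_zeroU_eq hupd; subst he
      obtain ⟨χ, hs, hb⟩ := ih
      exact ⟨χ, .stable (.stableConj hst) hupd hw hs, hb⟩
    | conjStableAnswer hq => exact absurd trivial hnd
    | stableFinishing => exact absurd trivial hnd
    | branchConj hopt hsub =>
      have he := upd_zeroU_eq hupd; subst he
      obtain ⟨χ, hs, hb⟩ := ih
      exact ⟨χ, .branch (.branchConj hopt hsub) hupd hw hs, hb⟩
    | branchAnswer hq => exact absurd trivial hnd
    | branchObservation hset => exact absurd trivial hnd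
    | branchAccounting =>
      obtain ⟨φ, hs, hb⟩ := ih
      exact ⟨e', φ, hupd, hw, hs, hb⟩
  | @defend g e hd h2 h3 ih =>
    cases g with
    | att p Q => exact absurd hd (by simp [specGame, isDefender])
    | attD p Q => exact absurd hd (by simp [specGame, isDefender])
    | attC p q => exact absurd hd (by simp [specGame, isDefender])
    | attB p Q => exact absurd hd (by simp [specGame, isDefender])
    | defC p Q =>
      rcases Set.eq_empty_or_nonempty Q with rfl | ⟨q0, hq0⟩
      · refine ⟨fun qq => absurd qq.2 (Set.notMem_empty _),
          StratD.conj (fun _ => zeroU) (fun _ => e) _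
            (fun qq => absurd qq.2 (Set.notMem_empty _))
            (fun qq => absurd qq.2 (Set.notMem_empty _))
            (fun qq => absurd qq.2 (Set.notMem_empty _))
            (fun qq => absurd qq.2 (Set.notMem_empty _)), ?_⟩
        rw [exprE]
        exact iSup_le fun hne => absurd hne.some.2 (Set.notMem_empty _)
      · have hmv : GMove Tr τ (.defC p Q) (decU 2) (.attC p q0) := .conjAnswer hq0
        obtain ⟨e2, hup⟩ := Option.ne_none_iff_exists'.mp (h2 _ _ hmv)
        have ihq : ∀ qq : {q // q ∈ Q},
            ∃ ψ, StratC Tr τ (.attC p qq.1) e2 ψ ∧ exprC ψ ≤ e2 :=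
          fun qq => ih _ _ _ (.conjAnswer qq.2) hup
        choose ψs hs hb using ihq
        refine ⟨ψs, StratD.conj (fun _ => decU 2) (fun _ => e2) ψs
          (fun qq => .conjAnswer qq.2) (fun _ => hup)
          (fun qq => h3 _ _ _ (.conjAnswer qq.2) hup) hs, ?_⟩
        rw [exprE]
        refine iSup_le fun _ => ?_
        exact le_trans (add_le_add_right (iSup_le hb) _) (unit_add_le hup)
    | defS p Q =>
      rcases Set.eq_empty_or_nonempty Q with rfl | ⟨q0, hq0⟩
      · have hmv : GMove Tr τ (.defS p ∅) (decU 3) (.defC p ∅) := .stableFinishing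
        obtain ⟨e3, hup⟩ := Option.ne_none_iff_exists'.mp (h2 _ _ hmv)
        refine ⟨.stableConj Empty fun x => x.elim,
          StratD.stableFinish hmv hup (h3 _ _ _ hmv hup), ?_⟩
        rw [exprE]
        exact le_trans (add_le_add_right (iSup_le fun (i : Empty) => i.elim) _) (unit_add_le hup)
      · have hmv : GMove Tr τ (.defS p Q) (decU 3) (.attC p q0) := .conjStableAnswer hq0
        obtain ⟨e3, hup⟩ := Option.ne_none_iff_exists'.mp (h2 _ _ hmv)
        have ihq : ∀ qq : {q // q ∈ Q},
            ∃ ψ, StratC Tr τ (.attC p qq.1) e3 ψ ∧ exprC ψ ≤ e3 :=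
          fun qq => ih _ _ _ (.conjStableAnswer qq.2) hup
        choose ψs hs hb using ihq
        refine ⟨.stableConj _ ψs, StratD.stableConj ⟨q0, hq0⟩ (fun _ => decU 3) (fun _ => e3) ψs
          (fun qq => .conjStableAnswer qq.2) (fun _ => hup)
          (fun qq => h3 _ _ _ (.conjStableAnswer qq.2) hup) hs, ?_⟩
        rw [exprE]
        exact le_trans (add_le_add_right (iSup_le hb) _) (unit_add_le hup)
    | defB p α p' Q Qa =>
      have hobs : GMove Tr τ (.defB p α p' Q Qa) minU16dec23
          (.attB p' {q' | ∃ q ∈ Qa, OptStep Tr τ q α q'}) := .branchObservation rfl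
      obtain ⟨e1, h1⟩ := Option.ne_none_iff_exists'.mp (h2 _ _ hobs)
      obtain ⟨ea, φa, hea, hwina, hsf, hef⟩ :
          ∃ (ea : Energy) (φa : Formula Act τ), upd e1 (decU 0) = some ea ∧
            (specGame Tr τ).Win (.att p' _) ea ∧
            StratF Tr τ (.att p' _) ea φa ∧ exprF φa ≤ ea :=
        ih _ _ _ hobs h1
      rcases Set.eq_empty_or_nonempty Q with rfl | ⟨q0, hq0⟩
      · set ψs : {q // q ∈ (∅ : Set Proc)} → Conjunct Act τ :=
          fun qq => absurd qq.2 (Set.notMem_empty _) with hψs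
        have hbot : ∀ t : Energy, (⨆ qq, exprC (ψs qq)) ≤ t :=
          fun t => iSup_le fun qq => absurd qq.2 (Set.notMem_empty _)
        refine ⟨.branchConj α φa _ ψs,
          StratD.branchConj (fun _ => zeroU) (fun _ => e) ψs hobs .branchAccounting h1 hea
            hwina hsf
            (fun qq => absurd qq.2 (Set.notMem_empty _))
            (fun qq => absurd qq.2 (Set.notMem_empty _))
            (fun qq => absurd qq.2 (Set.notMem_empty _))
            (fun qq => absurd qq.2 (Set.notMem_empty _)), ?_⟩
        rw [exprE]
        exact branch_price h1 hea hef (hbot (fun _ => e 1 - 1) 1) (hbot (fun _ => e 2 - 1) 2)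
          (fun k _ _ => hbot e k)
      · have hmv : GMove Tr τ (.defB p α p' Q Qa) dec23 (.attC p q0) := .branchAnswer hq0
        obtain ⟨e', hup⟩ := Option.ne_none_iff_exists'.mp (h2 _ _ hmv)
        have ihq : ∀ qq : {q // q ∈ Q},
            ∃ ψ, StratC Tr τ (.attC p qq.1) e' ψ ∧ exprC ψ ≤ e' :=
          fun qq => ih _ _ _ (.branchAnswer qq.2) hup
        choose ψs hs hb using ihq
        obtain ⟨_, _, hd1, hd2, hdk⟩ := dec23_fact hup
        have hSle : (⨆ qq, exprC (ψs qq)) ≤ e' := iSup_le hb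
        refine ⟨.branchConj α φa _ ψs,
          StratD.branchConj (fun _ => dec23) (fun _ => e') ψs hobs .branchAccounting h1 hea
            hwina hsf (fun qq => .branchAnswer qq.2) (fun _ => hup)
            (fun qq => h3 _ _ _ (.branchAnswer qq.2) hup) hs, ?_⟩
        rw [exprE]
        exact branch_price h1 hea hef ((hSle 1).trans_eq hd1) ((hSle 2).trans_eq hd2)
          (fun k hk1 hk2 => (hSle k).trans_eq (hdk k hk1 hk2))

end Main

/-- winning budgets at `[p,Q]_a` yield strategy formulas of
price at most `e`. -/
theorem win_implies_strategy_formula {Proc Act : Type} (Tr : Proc → Act → Proc → Prop)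
    (τ : Act) (p : Proc) (Q : Set Proc) (e : Energy)
    (h : (specGame Tr τ).Win (.att p Q) e) :
    ∃ φ : Formula Act τ, StratF Tr τ (.att p Q) e φ ∧ exprF φ ≤ e := by
  exact win_motive h

end Spectroscopy
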